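/- (Density of generic games) For every pair of payoff functions (v₁, v₂) on A₁ × A₂ and every ε > 0, there exist payoff functions (v′₁, v′₂) with ∑_{i=1,2} ∑_{a ∈ A₁ × A₂} |v_i(a) − v′_i(a)| < ε such that in the game with payoffs (v′₁, v′₂), for every player i and every k ≥ 1, the survivor set Σᵏ_{θ_{ik}} of the Δ^κ-rationalization procedure is a singleton; consequently, in the perturbed game, Ψᵏ_{θ_{ik}} = Σᵏ_{θ_{ik}} for every i and k. -/

import Mathlib

open scoped BigOperators
open Classical

noncomputable section

/-- A belief of a player: a probability distribution over
(opponent level-type, opponent action) pairs. -/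
structure Belief (B : Type*) where
  p : ℕ × B → ℝ
  nonneg : ∀ x, 0 ≤ p x
  hasSum_one : HasSum p 1

/-- Marginal probability assigned to the opponent's level-`t` type. -/
def Belief.marg {B : Type*} [Fintype B] (μ : Belief B) (t : ℕ) : ℝ := ∑ b : B, μ.p (t, b)

/-- Probability assigned by a belief to a set of (level, action) pairs. -/
def Belief.probOn {B : Type*} (μ : Belief B) (S : Set (ℕ × B)) : ℝ := ∑' x, S.indicator μ.p x

/-- `f` normalized to the levels `0, …, k-1` (denoted `f^k` in the paper). -/
def fnorm (f : ℕ → ℝ) (k t : ℕ) : ℝ := f t / ∑ ℓ ∈ Finset.range k, f ℓ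

/-- Membership in `Δ^{θ_{ik}}`: conditions K1–K3 for `k ≥ 1`; no restriction for `k = 0`. -/
def memDelta {B : Type*} [Fintype B] (f : ℕ → ℝ) (k : ℕ) (μ : Belief B) : Prop :=
  k ≠ 0 →
    ((∀ t, k ≤ t → μ.marg t = 0) ∧
     (0 < μ.marg 0 → ∀ b : B, μ.p (0, b) / μ.marg 0 = 1 / (Fintype.card B : ℝ)) ∧
     (∀ t, t < k → μ.marg t = fnorm f k t))

/-- Expected payoff of own action `a` for the own level-`k` type given belief `μ`:
the level-0 type's payoff is constant `0`, all other types get `v`. -/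
def expPay {A B : Type*} (v : A → B → ℝ) (k : ℕ) (μ : Belief B) (a : A) : ℝ :=
  ∑' x : ℕ × B, μ.p x * (if k = 0 then 0 else v a x.2)

/-- `a` is a best response to belief `μ` under the own level-`k` type. -/
def isBR {A B : Type*} (v : A → B → ℝ) (k : ℕ) (μ : Belief B) (a : A) : Prop :=
  ∀ a' : A, expPay v k μ a' ≤ expPay v k μ a

/-- The Δ^κ-rationalization procedure; component 1 is player 1's set of surviving
(level, action) pairs, component 2 is player 2's. -/
def SigmaProc {A B : Type*} [Fintype A] [Fintype B]
    (v1 : A → B → ℝ) (v2 : B → A → ℝ) (f : ℕ → ℝ) :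
    ℕ → Set (ℕ × A) × Set (ℕ × B)
  | 0 => (Set.univ, Set.univ)
  | n + 1 =>
      let P := SigmaProc v1 v2 f n
      ({x | x ∈ P.1 ∧ ∃ μ : Belief B, memDelta f x.1 μ ∧ μ.probOn P.2 = 1 ∧ isBR v1 x.1 μ x.2},
       {y | y ∈ P.2 ∧ ∃ μ : Belief A, memDelta f y.1 μ ∧ μ.probOn P.1 = 1 ∧ isBR v2 y.1 μ y.2})

/-- The section `Σⁿ_{θ_{1k}}` of player 1 (as a set of actions). -/
def SigmaSec1 {A B : Type*} [Fintype A] [Fintype B]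
    (v1 : A → B → ℝ) (v2 : B → A → ℝ) (f : ℕ → ℝ) (n k : ℕ) : Set A :=
  {a | (k, a) ∈ (SigmaProc v1 v2 f n).1}

/-- The section `Σⁿ_{θ_{2k}}` of player 2 (as a set of actions). -/
def SigmaSec2 {A B : Type*} [Fintype A] [Fintype B]
    (v1 : A → B → ℝ) (v2 : B → A → ℝ) (f : ℕ → ℝ) (n k : ℕ) : Set B :=
  {b | (k, b) ∈ (SigmaProc v1 v2 f n).2}

/-- The CH-procedure requirement on beliefs at step `n+1`, given the previous
sections `Ψⁿ` of the opponent: the support of `μ` equals `∪_{t=0}^{n} Ψⁿ_{θ_{-i,t}}`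
and `μ` is conditionally uniform over each `Ψⁿ_{θ_{-i,t}}`. -/
def CHBelief {B : Type*} (Ψ : ℕ → Set B) (n : ℕ) (μ : Belief B) : Prop :=
  (∀ x : ℕ × B, μ.p x ≠ 0 ↔ x.1 ≤ n ∧ x.2 ∈ Ψ x.1) ∧
  (∀ t, t ≤ n → ∀ b b' : B, b ∈ Ψ t → b' ∈ Ψ t → μ.p (t, b) = μ.p (t, b'))

/-- The CH-procedure: step `n` returns, for each player and each level `k`,
the set of actions in `Ψⁿ_{θ_{ik}}`. -/
def CHProc {A B : Type*} [Fintype A] [Fintype B]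
    (v1 : A → B → ℝ) (v2 : B → A → ℝ) (f : ℕ → ℝ) :
    ℕ → (ℕ → Set A) × (ℕ → Set B)
  | 0 => (fun _ => Set.univ, fun _ => Set.univ)
  | n + 1 =>
      let P := CHProc v1 v2 f n
      (fun k =>
        if k = n + 1 then
          {a | ∃ μ : Belief B, memDelta f (n + 1) μ ∧ CHBelief P.2 n μ ∧ isBR v1 (n + 1) μ a}
        else P.1 k,
       fun k =>
        if k = n + 1 then
          {b | ∃ μ : Belief A, memDelta f (n + 1) μ ∧ CHBelief P.1 n μ ∧ isBR v2 (n + 1) μ b}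
        else P.2 k)

/-- `Ψⁿ_{θ_{1k}}` for player 1 (as a set of actions). -/
def CHSec1 {A B : Type*} [Fintype A] [Fintype B]
    (v1 : A → B → ℝ) (v2 : B → A → ℝ) (f : ℕ → ℝ) (n k : ℕ) : Set A :=
  (CHProc v1 v2 f n).1 k

/-- `Ψⁿ_{θ_{2k}}` for player 2 (as a set of actions). -/
def CHSec2 {A B : Type*} [Fintype A] [Fintype B]
    (v1 : A → B → ℝ) (v2 : B → A → ℝ) (f : ℕ → ℝ) (n k : ℕ) : Set B :=
  (CHProc v1 v2 f n).2 k

end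

noncomputable section Aux

open Finset

variable {A B : Type*}

/-- Choice of a maximizer of a real function on a nonempty finite type. -/
def argmaxF [Fintype A] [Nonempty A] (g : A → ℝ) : A :=
  Classical.choose (Finset.exists_max_image Finset.univ g Finset.univ_nonempty)

lemma argmaxF_le [Fintype A] [Nonempty A] (g : A → ℝ) (a : A) : g a ≤ g (argmaxF g) :=
  (Classical.choose_spec (Finset.exists_max_image Finset.univ g Finset.univ_nonempty)).2 a
    (Finset.mem_univ a)

/-- The expected payoff of the level-`k` type against the "canonical" belief whose
level-`s` conditional is the point mass at `β s` (for `1 ≤ s < k`) and uniform at level 0. -/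
def Efun [Fintype B] (w : A → B → ℝ) (f : ℕ → ℝ) (k : ℕ) (β : ℕ → B) (a : A) : ℝ :=
  ∑ s ∈ Finset.range k,
    fnorm f k s * (if s = 0 then (∑ b : B, w a b) / (Fintype.card B : ℝ) else w a (β s))

lemma Efun_congr [Fintype B] (w : A → B → ℝ) (f : ℕ → ℝ) (k : ℕ) {β β' : ℕ → B}
    (h : ∀ s, s ≠ 0 → s < k → β s = β' s) : Efun w f k β = Efun w f k β' := by
  funext a
  unfold Efun
  refine Finset.sum_congr rfl fun s hs => ?_
  rcases eq_or_ne s 0 with h0 | h0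
  · simp [h0]
  · simp [h0, h s h0 (Finset.mem_range.1 hs)]

/-- The recursively defined "generically unique" action sequence for the two players. -/
def seqD [Fintype A] [Fintype B] [Nonempty A] [Nonempty B]
    (v1 : A → B → ℝ) (v2 : B → A → ℝ) (f : ℕ → ℝ) : ℕ → A × B
  | k =>
    (argmaxF (Efun v1 f k fun s => if h : s < k then (seqD v1 v2 f s).2 else Classical.arbitrary B),
     argmaxF (Efun v2 f k fun s => if h : s < k then (seqD v1 v2 f s).1 else Classical.arbitrary A))
  decreasing_by all_goals exact h

section BeliefLemmas

lemma probOn_eq_one_of_support (μ : Belief B) (S : Set (ℕ × B))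
    (h : ∀ x, μ.p x ≠ 0 → x ∈ S) : μ.probOn S = 1 := by
  have hind : S.indicator μ.p = μ.p := by
    funext x
    by_cases hx : x ∈ S
    · simp [Set.indicator_of_mem hx]
    · simp [Set.indicator_of_notMem hx]
      exact not_not.1 fun hne => hx (h x (Ne.symm hne))
  unfold Belief.probOn
  rw [hind]
  exact μ.hasSum_one.tsum_eq

lemma probOn_forces (μ : Belief B) (S : Set (ℕ × B)) (h : μ.probOn S = 1)
    {x : ℕ × B} (hx : x ∉ S) : μ.p x = 0 := by
  have hsum : Summable μ.p := μ.hasSum_one.summable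
  have hS : Summable (S.indicator μ.p) := hsum.indicator S
  have hSc : Summable (Sᶜ.indicator μ.p) := hsum.indicator Sᶜ
  have hadd : (∑' y, S.indicator μ.p y) + (∑' y, Sᶜ.indicator μ.p y) = 1 := by
    rw [← Summable.tsum_add hS hSc]
    have : (fun y => S.indicator μ.p y + Sᶜ.indicator μ.p y) = μ.p := by
      have := Set.indicator_self_add_compl S μ.p
      funext y; exact congrFun this y
    rw [this]
    exact μ.hasSum_one.tsum_eq
  have h0 : (∑' y, Sᶜ.indicator μ.p y) = 0 := by
    have hp : μ.probOn S = ∑' y, S.indicator μ.p y := rfl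
    linarith [hp ▸ h, hadd]
  have hle : Sᶜ.indicator μ.p x ≤ 0 := by
    rw [← h0]
    exact Summable.le_tsum hSc x fun j _ => Set.indicator_nonneg (fun y _ => μ.nonneg y) j
  have hge : 0 ≤ Sᶜ.indicator μ.p x :=
    Set.indicator_nonneg (fun y _ => μ.nonneg y) x
  have heq : Sᶜ.indicator μ.p x = 0 := le_antisymm hle hge
  rwa [Set.indicator_of_mem (Set.mem_compl hx)] at heq

/-- Pointwise description of the "canonical" belief of the level-`k` type. -/
def ptw [Fintype B] (f : ℕ → ℝ) (k : ℕ) (β : ℕ → B) (μ : Belief B) : Prop :=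
  (∀ b, μ.p (0, b) = fnorm f k 0 / (Fintype.card B : ℝ)) ∧
  (∀ s b, s ≠ 0 → s < k → μ.p (s, b) = if b = β s then fnorm f k s else 0) ∧
  (∀ s b, k ≤ s → μ.p (s, b) = 0)

end BeliefLemmas

end Aux

noncomputable section Aux2

open Finset

variable {A B : Type*}

lemma fnorm_pos {f : ℕ → ℝ} (hf : ∀ n, 0 < f n) {k : ℕ} (hk : k ≠ 0) (t : ℕ) :
    0 < fnorm f k t := by
  have hD : 0 < ∑ ℓ ∈ Finset.range k, f ℓ :=
    Finset.sum_pos (fun i _ => hf i) (Finset.nonempty_range_iff.2 hk)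
  exact div_pos (hf t) hD

lemma sum_fnorm {f : ℕ → ℝ} (hf : ∀ n, 0 < f n) {k : ℕ} (hk : k ≠ 0) :
    ∑ s ∈ Finset.range k, fnorm f k s = 1 := by
  have hD : 0 < ∑ ℓ ∈ Finset.range k, f ℓ :=
    Finset.sum_pos (fun i _ => hf i) (Finset.nonempty_range_iff.2 hk)
  unfold fnorm
  rw [← Finset.sum_div, div_self hD.ne']

lemma expPay_level_zero (w : A → B → ℝ) (μ : Belief B) (a : A) : expPay w 0 μ a = 0 := by
  simp [expPay]

lemma ptw_expPay [Fintype B] {f : ℕ → ℝ} {k : ℕ} (hk : k ≠ 0) {β : ℕ → B} {μ : Belief B}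
    (h : ptw f k β μ) (w : A → B → ℝ) (a : A) : expPay w k μ a = Efun w f k β a := by
  obtain ⟨h0, hmid, hhi⟩ := h
  unfold expPay
  rw [tsum_eq_sum (s := Finset.range k ×ˢ Finset.univ) ?hz]
  case hz =>
    intro x hx
    have : k ≤ x.1 := by
      by_contra hlt
      exact hx (Finset.mem_product.2 ⟨Finset.mem_range.2 (lt_of_not_ge hlt), Finset.mem_univ _⟩)
    rw [show x = (x.1, x.2) from rfl, hhi x.1 x.2 this, zero_mul]
  rw [Finset.sum_product]
  refine Finset.sum_congr rfl fun s hs => ?_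
  rcases eq_or_ne s 0 with rfl | hs0
  · simp only [if_pos rfl, if_neg hk, if_true]
    rw [Finset.sum_congr rfl fun b _ => by rw [h0 b], ← Finset.mul_sum]
    ring
  · simp only [if_neg hs0, if_neg hk]
    rw [Finset.sum_congr rfl fun b _ => by rw [hmid s b hs0 (Finset.mem_range.1 hs)]]
    rw [Finset.sum_eq_single (β s) (fun b _ hb => by rw [if_neg hb, zero_mul]) (by simp),
      if_pos rfl]

lemma ptw_memDelta [Fintype B] [Nonempty B] {f : ℕ → ℝ} (hf : ∀ n, 0 < f n)
    {k : ℕ} {β : ℕ → B} {μ : Belief B} (h : ptw f k β μ) : memDelta f k μ := by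
  intro hk
  obtain ⟨h0, hmid, hhi⟩ := h
  have hN : (0 : ℝ) < (Fintype.card B : ℝ) := by
    exact_mod_cast Fintype.card_pos
  have hmarg : ∀ t, t < k → μ.marg t = fnorm f k t := by
    intro t ht
    rcases eq_or_ne t 0 with rfl | ht0
    · unfold Belief.marg
      rw [Finset.sum_congr rfl fun b _ => h0 b, Finset.sum_const, nsmul_eq_mul]
      field_simp
      rw [Finset.card_univ]; ring
    · unfold Belief.marg
      rw [Finset.sum_congr rfl fun b _ => hmid t b ht0 ht]
      simp
  refine ⟨?_, ?_, hmarg⟩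
  · intro t ht
    unfold Belief.marg
    exact Finset.sum_eq_zero fun b _ => hhi t b ht
  · intro hpos b
    have hm0 : μ.marg 0 = fnorm f k 0 := hmarg 0 (Nat.pos_of_ne_zero hk)
    rw [h0 b, hm0, div_right_comm, div_self (fnorm_pos hf hk 0).ne']

lemma forced_ptw [Fintype B] [Nonempty B] {f : ℕ → ℝ} (hf : ∀ n, 0 < f n)
    {k : ℕ} (hk : k ≠ 0) {β : ℕ → B} {μ : Belief B} (hmd : memDelta f k μ)
    (hforce : ∀ s b, s ≠ 0 → s < k → b ≠ β s → μ.p (s, b) = 0) : ptw f k β μ := by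
  obtain ⟨hK1, hK2, hK3⟩ := hmd hk
  have hN : (0 : ℝ) < (Fintype.card B : ℝ) := by exact_mod_cast Fintype.card_pos
  have hhi : ∀ s b, k ≤ s → μ.p (s, b) = 0 := by
    intro s b hs
    have h1 : μ.p (s, b) ≤ μ.marg s := by
      unfold Belief.marg
      exact Finset.single_le_sum (fun b' _ => μ.nonneg (s, b')) (Finset.mem_univ b)
    have := hK1 s hs
    exact le_antisymm (by linarith) (μ.nonneg _)
  refine ⟨?_, ?_, hhi⟩
  · intro b
    have hm0 : μ.marg 0 = fnorm f k 0 := hK3 0 (Nat.pos_of_ne_zero hk)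
    have hpos : 0 < μ.marg 0 := hm0 ▸ fnorm_pos hf hk 0
    have := hK2 hpos b
    have h2 : μ.p (0, b) = μ.marg 0 / (Fintype.card B : ℝ) := by
      field_simp at this ⊢
      linarith [this]
    rw [h2, hm0]
  · intro s b hs0 hsk
    by_cases hb : b = β s
    · have hm : μ.marg s = fnorm f k s := hK3 s hsk
      have hsum : μ.marg s = μ.p (s, β s) := by
        unfold Belief.marg
        rw [Finset.sum_eq_single (β s) (fun b' _ hb' => hforce s b' hs0 hsk hb') (by simp)]
      rw [hb, if_pos rfl, ← hm, hsum]
    · rw [if_neg hb]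
      exact hforce s b hs0 hsk hb

end Aux2

noncomputable section Aux3

open Finset

variable {A B : Type*}

/-- The point-mass belief at a single pair. -/
def diracB (x₀ : ℕ × B) : Belief B where
  p := fun x => if x = x₀ then 1 else 0
  nonneg := fun x => by split <;> norm_num
  hasSum_one := hasSum_ite_eq x₀ 1

lemma diracB_support (x₀ : ℕ × B) {x : ℕ × B} (h : (diracB x₀).p x ≠ 0) : x = x₀ := by
  by_contra hx
  exact h (if_neg hx)

/-- The canonical belief of a level-`k` type (`k ≠ 0`): level-0 conditional uniform,
level-`s` conditional the point mass at `β s`. -/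
def ptwBelief [Fintype B] [Nonempty B] (f : ℕ → ℝ) (hf : ∀ n, 0 < f n) (k : ℕ) (hk : k ≠ 0)
    (β : ℕ → B) : Belief B where
  p := fun x =>
    if x.1 = 0 then fnorm f k 0 / (Fintype.card B : ℝ)
    else if x.1 < k ∧ x.2 = β x.1 then fnorm f k x.1 else 0
  nonneg := fun x => by
    have hN : (0 : ℝ) < (Fintype.card B : ℝ) := by exact_mod_cast Fintype.card_pos
    split
    · exact div_nonneg (fnorm_pos hf hk 0).le hN.le
    · split
      · exact (fnorm_pos hf hk _).le
      · exact le_refl 0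
  hasSum_one := by
    have hN : (0 : ℝ) < (Fintype.card B : ℝ) := by exact_mod_cast Fintype.card_pos
    have hz : ∀ x ∉ (Finset.range k ×ˢ (Finset.univ : Finset B)),
        (fun x : ℕ × B =>
          if x.1 = 0 then fnorm f k 0 / (Fintype.card B : ℝ)
          else if x.1 < k ∧ x.2 = β x.1 then fnorm f k x.1 else 0) x = 0 := by
      intro x hx
      have hxk : k ≤ x.1 := by
        by_contra hlt
        exact hx (Finset.mem_product.2 ⟨Finset.mem_range.2 (lt_of_not_ge hlt), Finset.mem_univ _⟩)
      have hx0 : x.1 ≠ 0 := fun h => hk (Nat.le_zero.1 (h ▸ hxk))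
      simp only [if_neg hx0]
      rw [if_neg]
      rintro ⟨h1, -⟩
      exact absurd h1 (not_lt.2 hxk)
    have hsum : ∑ x ∈ Finset.range k ×ˢ (Finset.univ : Finset B),
        (if x.1 = 0 then fnorm f k 0 / (Fintype.card B : ℝ)
          else if x.1 < k ∧ x.2 = β x.1 then fnorm f k x.1 else 0) = 1 := by
      rw [Finset.sum_product]
      have : ∀ s ∈ Finset.range k, (∑ b : B,
          (if s = 0 then fnorm f k 0 / (Fintype.card B : ℝ)
            else if s < k ∧ b = β s then fnorm f k s else 0)) = fnorm f k s := by
        intro s hs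
        rcases eq_or_ne s 0 with rfl | hs0
        · simp only [if_true]
          rw [Finset.sum_const, nsmul_eq_mul]
          field_simp
          rw [Finset.card_univ]; ring
        · simp only [if_neg hs0]
          have hsk : s < k := Finset.mem_range.1 hs
          rw [Finset.sum_eq_single (β s) (fun b _ hb => by rw [if_neg (by tauto)]) (by simp)]
          rw [if_pos ⟨hsk, rfl⟩]
      rw [Finset.sum_congr rfl this]
      exact sum_fnorm hf hk
    have : HasSum _ _ := hasSum_sum_of_ne_finset_zero hz
    rwa [hsum] at this
  
lemma ptwBelief_p [Fintype B] [Nonempty B] (f : ℕ → ℝ) (hf : ∀ n, 0 < f n) (k : ℕ)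
    (hk : k ≠ 0) (β : ℕ → B) (x : ℕ × B) :
    (ptwBelief f hf k hk β).p x =
      if x.1 = 0 then fnorm f k 0 / (Fintype.card B : ℝ)
      else if x.1 < k ∧ x.2 = β x.1 then fnorm f k x.1 else 0 := rfl

lemma ptwBelief_ptw [Fintype B] [Nonempty B] (f : ℕ → ℝ) (hf : ∀ n, 0 < f n) (k : ℕ)
    (hk : k ≠ 0) (β : ℕ → B) : ptw f k β (ptwBelief f hf k hk β) := by
  refine ⟨fun b => by rw [ptwBelief_p]; exact if_pos rfl, ?_, ?_⟩
  · intro s b hs0 hsk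
    rw [ptwBelief_p]
    show (if (s, b).1 = 0 then _ else _) = _
    rw [if_neg hs0]
    by_cases hb : b = β s
    · rw [if_pos ⟨hsk, hb⟩, if_pos hb]
    · rw [if_neg (by tauto), if_neg hb]
  · intro s b hks
    have hs0 : s ≠ 0 := fun h => hk (Nat.le_zero.1 (h ▸ hks))
    rw [ptwBelief_p]
    show (if (s, b).1 = 0 then _ else _) = _
    rw [if_neg hs0]
    exact if_neg (by rintro ⟨h1, -⟩; exact absurd h1 (not_lt.2 hks))

lemma ptwBelief_support [Fintype B] [Nonempty B] (f : ℕ → ℝ) (hf : ∀ n, 0 < f n) (k : ℕ)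
    (hk : k ≠ 0) (β : ℕ → B) {x : ℕ × B} (h : (ptwBelief f hf k hk β).p x ≠ 0) :
    x.1 < k ∧ (x.1 = 0 ∨ x.2 = β x.1) := by
  by_cases h0 : x.1 = 0
  · exact ⟨h0 ▸ Nat.pos_of_ne_zero hk, Or.inl h0⟩
  · rw [ptwBelief_p, if_neg h0] at h
    by_cases hc : x.1 < k ∧ x.2 = β x.1
    · exact ⟨hc.1, Or.inr hc.2⟩
    · exact absurd (if_neg hc) h

/-- Nonvanishing of the canonical belief on its support. -/
lemma ptwBelief_pos [Fintype B] [Nonempty B] (f : ℕ → ℝ) (hf : ∀ n, 0 < f n) (k : ℕ)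
    (hk : k ≠ 0) (β : ℕ → B) {x : ℕ × B} (h1 : x.1 < k) (h2 : x.1 = 0 ∨ x.2 = β x.1) :
    0 < (ptwBelief f hf k hk β).p x := by
  have hN : (0 : ℝ) < (Fintype.card B : ℝ) := by exact_mod_cast Fintype.card_pos
  rw [ptwBelief_p]
  rcases eq_or_ne x.1 0 with h0 | h0
  · rw [if_pos h0]
    exact div_pos (fnorm_pos hf hk 0) hN
  · have hb : x.2 = β x.1 := h2.resolve_left h0
    rw [if_neg h0, if_pos ⟨h1, hb⟩]
    exact fnorm_pos hf hk _

lemma seqD_eq [Fintype A] [Fintype B] [Nonempty A] [Nonempty B]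
    (v1 : A → B → ℝ) (v2 : B → A → ℝ) (f : ℕ → ℝ) (k : ℕ) :
    seqD v1 v2 f k =
      (argmaxF (Efun v1 f k fun s => if h : s < k then (seqD v1 v2 f s).2 else Classical.arbitrary B),
       argmaxF (Efun v2 f k fun s => if h : s < k then (seqD v1 v2 f s).1 else Classical.arbitrary A)) := by
  rw [seqD]

end Aux3

/-- density of generic games: every game can be ε-perturbed into a game in
which all step-k survivor sets of the Δ^κ-rationalization procedure for level-k types
(k ≥ 1) are singletons, and hence the CH- and Δ^κ-procedures coincide. -/
theorem generic_games_dense {A B : Type*} [Fintype A] [Fintype B] [Nonempty A] [Nonempty B]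
    (f : ℕ → ℝ) (hf : ∀ n, 0 < f n) (hfsum : HasSum f 1)
    (v1 : A → B → ℝ) (v2 : B → A → ℝ) (ε : ℝ) (hε : 0 < ε) :
    ∃ (w1 : A → B → ℝ) (w2 : B → A → ℝ),
      (∑ x : A × B, (|v1 x.1 x.2 - w1 x.1 x.2| + |v2 x.2 x.1 - w2 x.2 x.1|)) < ε ∧
      (∀ k : ℕ, 1 ≤ k →
        (∃ a : A, SigmaSec1 w1 w2 f k k = {a}) ∧ (∃ b : B, SigmaSec2 w1 w2 f k k = {b})) ∧
      (∀ k : ℕ,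
        CHSec1 w1 w2 f k k = SigmaSec1 w1 w2 f k k ∧
        CHSec2 w1 w2 f k k = SigmaSec2 w1 w2 f k k) := by
  classical
  set r : A → ℝ := fun a => ((Fintype.equivFin A a : ℕ) : ℝ) with hr
  set q : B → ℝ := fun b => ((Fintype.equivFin B b : ℕ) : ℝ) with hq
  have hrinj : Function.Injective r := fun a a' h =>
    (Fintype.equivFin A).injective (Fin.ext (Nat.cast_injective h))
  have hqinj : Function.Injective q := fun b b' h =>
    (Fintype.equivFin B).injective (Fin.ext (Nat.cast_injective h))
  -- the countable set of "bad" perturbation sizes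
  set extB : ∀ k : ℕ, (Fin k → B) → (ℕ → B) := fun k β s =>
    if h : s < k then β ⟨s, h⟩ else Classical.arbitrary B with hextB
  set extA : ∀ k : ℕ, (Fin k → A) → (ℕ → A) := fun k α s =>
    if h : s < k then α ⟨s, h⟩ else Classical.arbitrary A with hextA
  set Bad1 : Set ℝ := ⋃ (k : ℕ) (β : Fin k → B) (a : A) (a' : A),
    {δ | a ≠ a' ∧ Efun v1 f k (extB k β) a + δ * r a = Efun v1 f k (extB k β) a' + δ * r a'}
    with hBad1
  set Bad2 : Set ℝ := ⋃ (k : ℕ) (α : Fin k → A) (b : B) (b' : B),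
    {δ | b ≠ b' ∧ Efun v2 f k (extA k α) b + δ * q b = Efun v2 f k (extA k α) b' + δ * q b'}
    with hBad2
  have hBad1c : Bad1.Countable := by
    refine Set.countable_iUnion fun k => Set.countable_iUnion fun β =>
      Set.countable_iUnion fun a => Set.countable_iUnion fun a' => ?_
    refine Set.Subsingleton.countable fun δ hδ δ' hδ' => ?_
    have h1 := hδ.2
    have h2 := hδ'.2
    have hne : r a - r a' ≠ 0 := sub_ne_zero.2 fun h => hδ.1 (hrinj h)
    have : δ * (r a - r a') = δ' * (r a - r a') := by ring_nf; ring_nf at h1 h2; linarith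
    exact mul_right_cancel₀ hne this
  have hBad2c : Bad2.Countable := by
    refine Set.countable_iUnion fun k => Set.countable_iUnion fun α =>
      Set.countable_iUnion fun b => Set.countable_iUnion fun b' => ?_
    refine Set.Subsingleton.countable fun δ hδ δ' hδ' => ?_
    have h1 := hδ.2
    have h2 := hδ'.2
    have hne : q b - q b' ≠ 0 := sub_ne_zero.2 fun h => hδ.1 (hqinj h)
    have : δ * (q b - q b') = δ' * (q b - q b') := by ring_nf; ring_nf at h1 h2; linarith
    exact mul_right_cancel₀ hne this
  -- choose a small non-bad δ
  set C : ℝ := ∑ x : A × B, (|r x.1| + |q x.2|) with hC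
  have hC0 : 0 ≤ C := Finset.sum_nonneg fun x _ => add_nonneg (abs_nonneg _) (abs_nonneg _)
  have hm : 0 < ε / (C + 1) := div_pos hε (by linarith)
  obtain ⟨δ, hδIoo, hδBad⟩ : ∃ δ, δ ∈ Set.Ioo (0 : ℝ) (ε / (C + 1)) ∧ δ ∉ Bad1 ∪ Bad2 := by
    by_contra hcon
    push_neg at hcon
    have hsub : Set.Ioo (0 : ℝ) (ε / (C + 1)) ⊆ Bad1 ∪ Bad2 := fun δ hδ => hcon δ hδ
    have hcount : (Set.Ioo (0 : ℝ) (ε / (C + 1))).Countable :=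
      (hBad1c.union hBad2c).mono hsub
    have h0 : MeasureTheory.volume (Set.Ioo (0 : ℝ) (ε / (C + 1))) = 0 :=
      hcount.measure_zero _
    rw [Real.volume_Ioo] at h0
    have : ε / (C + 1) - 0 ≤ 0 := by
      by_contra hpos
      exact (ENNReal.ofReal_pos.2 (by linarith)).ne' h0
    linarith
  obtain ⟨hδ0, hδm⟩ := hδIoo
  set w1 : A → B → ℝ := fun a b => v1 a b + δ * r a with hw1
  set w2 : B → A → ℝ := fun b a => v2 b a + δ * q b with hw2
  have hN : (0 : ℝ) < (Fintype.card B : ℝ) := by exact_mod_cast Fintype.card_pos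
  have hM : (0 : ℝ) < (Fintype.card A : ℝ) := by exact_mod_cast Fintype.card_pos
  -- the payoff shift
  have hE1 : ∀ (k : ℕ), k ≠ 0 → ∀ (β : ℕ → B) (a : A),
      Efun w1 f k β a = Efun v1 f k β a + δ * r a := by
    intro k hk β a
    unfold Efun
    have hterm : ∀ s ∈ Finset.range k,
        fnorm f k s * (if s = 0 then (∑ b : B, w1 a b) / (Fintype.card B : ℝ) else w1 a (β s))
        = fnorm f k s * (if s = 0 then (∑ b : B, v1 a b) / (Fintype.card B : ℝ) else v1 a (β s))
          + fnorm f k s * (δ * r a) := by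
      intro s hs
      rcases eq_or_ne s 0 with rfl | hs0
      · simp only [if_pos rfl, ↓reduceIte]
        have : (∑ b : B, w1 a b) = (∑ b : B, v1 a b) + (Fintype.card B : ℝ) * (δ * r a) := by
          rw [hw1]
          rw [Finset.sum_add_distrib, Finset.sum_const, Finset.card_univ, nsmul_eq_mul]
        rw [this]
        field_simp
      · simp only [if_neg hs0]
        rw [hw1]
        ring
    rw [Finset.sum_congr rfl hterm, Finset.sum_add_distrib, ← Finset.sum_mul, sum_fnorm hf hk,
      one_mul]
  have hE2 : ∀ (k : ℕ), k ≠ 0 → ∀ (α : ℕ → A) (b : B),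
      Efun w2 f k α b = Efun v2 f k α b + δ * q b := by
    intro k hk α b
    unfold Efun
    have hterm : ∀ s ∈ Finset.range k,
        fnorm f k s * (if s = 0 then (∑ a : A, w2 b a) / (Fintype.card A : ℝ) else w2 b (α s))
        = fnorm f k s * (if s = 0 then (∑ a : A, v2 b a) / (Fintype.card A : ℝ) else v2 b (α s))
          + fnorm f k s * (δ * q b) := by
      intro s hs
      rcases eq_or_ne s 0 with rfl | hs0
      · simp only [if_pos rfl, ↓reduceIte]
        have : (∑ a : A, w2 b a) = (∑ a : A, v2 b a) + (Fintype.card A : ℝ) * (δ * q b) := by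
          rw [hw2]
          rw [Finset.sum_add_distrib, Finset.sum_const, Finset.card_univ, nsmul_eq_mul]
        rw [this]
        field_simp
      · simp only [if_neg hs0]
        rw [hw2]
        ring
    rw [Finset.sum_congr rfl hterm, Finset.sum_add_distrib, ← Finset.sum_mul, sum_fnorm hf hk,
      one_mul]
  -- uniqueness of maximizers of the perturbed expected payoffs
  have huniq1 : ∀ (k : ℕ), k ≠ 0 → ∀ (β : ℕ → B) (a a' : A),
      (∀ a'', Efun w1 f k β a'' ≤ Efun w1 f k β a) →
      (∀ a'', Efun w1 f k β a'' ≤ Efun w1 f k β a') → a = a' := by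
    intro k hk β a a' hmax hmax'
    by_contra hne
    have heq : Efun w1 f k β a = Efun w1 f k β a' := le_antisymm (hmax' a) (hmax a')
    rw [hE1 k hk β a, hE1 k hk β a'] at heq
    have hcongr : Efun v1 f k β = Efun v1 f k (extB k fun i : Fin k => β i) :=
      Efun_congr v1 f k fun s hs0 hsk => by
        rw [hextB]
        simp only [dif_pos hsk]
    apply hδBad
    left
    rw [hBad1]
    refine Set.mem_iUnion.2 ⟨k, Set.mem_iUnion.2 ⟨fun i : Fin k => β i,
      Set.mem_iUnion.2 ⟨a, Set.mem_iUnion.2 ⟨a', ⟨hne, ?_⟩⟩⟩⟩⟩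
    rw [← hcongr]
    exact heq
  have huniq2 : ∀ (k : ℕ), k ≠ 0 → ∀ (α : ℕ → A) (b b' : B),
      (∀ b'', Efun w2 f k α b'' ≤ Efun w2 f k α b) →
      (∀ b'', Efun w2 f k α b'' ≤ Efun w2 f k α b') → b = b' := by
    intro k hk α b b' hmax hmax'
    by_contra hne
    have heq : Efun w2 f k α b = Efun w2 f k α b' := le_antisymm (hmax' b) (hmax b')
    rw [hE2 k hk α b, hE2 k hk α b'] at heq
    have hcongr : Efun v2 f k α = Efun v2 f k (extA k fun i : Fin k => α i) :=
      Efun_congr v2 f k fun s hs0 hsk => by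
        rw [hextA]
        simp only [dif_pos hsk]
    apply hδBad
    right
    rw [hBad2]
    refine Set.mem_iUnion.2 ⟨k, Set.mem_iUnion.2 ⟨fun i : Fin k => α i,
      Set.mem_iUnion.2 ⟨b, Set.mem_iUnion.2 ⟨b', ⟨hne, ?_⟩⟩⟩⟩⟩
    rw [← hcongr]
    exact heq
  -- the canonical action sequences
  set A1 : ℕ → A := fun k => (seqD w1 w2 f k).1 with hA1
  set B2 : ℕ → B := fun k => (seqD w1 w2 f k).2 with hB2
  have hA1max : ∀ (k : ℕ), k ≠ 0 → ∀ a, Efun w1 f k B2 a ≤ Efun w1 f k B2 (A1 k) := by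
    intro k hk a
    have hrw : Efun w1 f k (fun s => if h : s < k then (seqD w1 w2 f s).2
        else Classical.arbitrary B) = Efun w1 f k B2 :=
      Efun_congr w1 f k fun s hs0 hsk => by rw [dif_pos hsk, hB2]
    have : A1 k = argmaxF (Efun w1 f k (fun s => if h : s < k then (seqD w1 w2 f s).2
        else Classical.arbitrary B)) := congrArg Prod.fst (seqD_eq w1 w2 f k)
    rw [this, hrw]
    exact argmaxF_le _ a
  have hB2max : ∀ (k : ℕ), k ≠ 0 → ∀ b, Efun w2 f k A1 b ≤ Efun w2 f k A1 (B2 k) := by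
    intro k hk b
    have hrw : Efun w2 f k (fun s => if h : s < k then (seqD w1 w2 f s).1
        else Classical.arbitrary A) = Efun w2 f k A1 :=
      Efun_congr w2 f k fun s hs0 hsk => by rw [dif_pos hsk, hA1]
    have : B2 k = argmaxF (Efun w2 f k (fun s => if h : s < k then (seqD w1 w2 f s).1
        else Classical.arbitrary A)) := congrArg Prod.snd (seqD_eq w1 w2 f k)
    rw [this, hrw]
    exact argmaxF_le _ b
  have hkey1 : ∀ (k : ℕ), k ≠ 0 → ∀ a, (∀ a', Efun w1 f k B2 a' ≤ Efun w1 f k B2 a) →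
      a = A1 k := fun k hk a hmax => huniq1 k hk B2 a (A1 k) hmax (hA1max k hk)
  have hkey2 : ∀ (k : ℕ), k ≠ 0 → ∀ b, (∀ b', Efun w2 f k A1 b' ≤ Efun w2 f k A1 b) →
      b = B2 k := fun k hk b hmax => huniq2 k hk A1 b (B2 k) hmax (hB2max k hk)
  -- membership unfolding for the Σ-procedure
  have hmemS1 : ∀ (n : ℕ) (x : ℕ × A), x ∈ (SigmaProc w1 w2 f (n + 1)).1 ↔
      x ∈ (SigmaProc w1 w2 f n).1 ∧ ∃ μ : Belief B, memDelta f x.1 μ ∧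
        μ.probOn (SigmaProc w1 w2 f n).2 = 1 ∧ isBR w1 x.1 μ x.2 := fun n x => Iff.rfl
  have hmemS2 : ∀ (n : ℕ) (y : ℕ × B), y ∈ (SigmaProc w1 w2 f (n + 1)).2 ↔
      y ∈ (SigmaProc w1 w2 f n).2 ∧ ∃ μ : Belief A, memDelta f y.1 μ ∧
        μ.probOn (SigmaProc w1 w2 f n).1 = 1 ∧ isBR w2 y.1 μ y.2 := fun n y => Iff.rfl
  -- the level-0 beliefs used to keep level-0 types alive
  have hmain : ∀ n : ℕ,
      ((∀ a, ((0 : ℕ), a) ∈ (SigmaProc w1 w2 f n).1) ∧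
       (∀ b, ((0 : ℕ), b) ∈ (SigmaProc w1 w2 f n).2)) ∧
      ((∀ t, t ≠ 0 → (t, A1 t) ∈ (SigmaProc w1 w2 f n).1) ∧
       (∀ t, t ≠ 0 → (t, B2 t) ∈ (SigmaProc w1 w2 f n).2)) ∧
      ((∀ t, t ≠ 0 → t ≤ n → ∀ a, (t, a) ∈ (SigmaProc w1 w2 f n).1 → a = A1 t) ∧
       (∀ t, t ≠ 0 → t ≤ n → ∀ b, (t, b) ∈ (SigmaProc w1 w2 f n).2 → b = B2 t)) := by
    intro n
    induction n with
    | zero =>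
      refine ⟨⟨fun a => Set.mem_univ _, fun b => Set.mem_univ _⟩,
        ⟨fun t ht => Set.mem_univ _, fun t ht => Set.mem_univ _⟩,
        ⟨fun t ht ht0 => absurd (Nat.le_zero.1 ht0) ht,
         fun t ht ht0 => absurd (Nat.le_zero.1 ht0) ht⟩⟩
    | succ n ih =>
      obtain ⟨⟨ih01, ih02⟩, ⟨ihs1, ihs2⟩, ⟨ihu1, ihu2⟩⟩ := ih
      -- level-0 survival
      have h01 : ∀ a, ((0 : ℕ), a) ∈ (SigmaProc w1 w2 f (n + 1)).1 := by
        intro a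
        refine (hmemS1 n (0, a)).2 ⟨ih01 a, diracB ((0 : ℕ), Classical.arbitrary B), ?_, ?_, ?_⟩
        · exact fun h => absurd rfl h
        · exact probOn_eq_one_of_support _ _ fun x hx =>
            (diracB_support _ hx) ▸ ih02 (Classical.arbitrary B)
        · intro a'
          rw [expPay_level_zero, expPay_level_zero]
      have h02 : ∀ b, ((0 : ℕ), b) ∈ (SigmaProc w1 w2 f (n + 1)).2 := by
        intro b
        refine (hmemS2 n (0, b)).2 ⟨ih02 b, diracB ((0 : ℕ), Classical.arbitrary A), ?_, ?_, ?_⟩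
        · exact fun h => absurd rfl h
        · exact probOn_eq_one_of_support _ _ fun x hx =>
            (diracB_support _ hx) ▸ ih01 (Classical.arbitrary A)
        · intro b'
          rw [expPay_level_zero, expPay_level_zero]
      -- survival of the canonical actions
      have hs1 : ∀ t, t ≠ 0 → (t, A1 t) ∈ (SigmaProc w1 w2 f (n + 1)).1 := by
        intro t ht
        refine (hmemS1 n (t, A1 t)).2 ⟨ihs1 t ht, ptwBelief f hf t ht B2,
          ptw_memDelta hf (ptwBelief_ptw f hf t ht B2), ?_, ?_⟩
        · refine probOn_eq_one_of_support _ _ fun x hx => ?_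
          obtain ⟨s, b⟩ := x
          obtain ⟨hlt, hcase⟩ := ptwBelief_support f hf t ht B2 hx
          rcases hcase with h0 | hB
          · rw [show s = 0 from h0]
            exact ih02 b
          · rcases eq_or_ne s 0 with rfl | hs0
            · exact ih02 b
            · rw [show b = B2 s from hB]
              exact ihs2 s hs0
        · intro a'
          rw [ptw_expPay ht (ptwBelief_ptw f hf t ht B2) w1 a',
            ptw_expPay ht (ptwBelief_ptw f hf t ht B2) w1 (A1 t)]
          exact hA1max t ht a'
      have hs2 : ∀ t, t ≠ 0 → (t, B2 t) ∈ (SigmaProc w1 w2 f (n + 1)).2 := by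
        intro t ht
        refine (hmemS2 n (t, B2 t)).2 ⟨ihs2 t ht, ptwBelief f hf t ht A1,
          ptw_memDelta hf (ptwBelief_ptw f hf t ht A1), ?_, ?_⟩
        · refine probOn_eq_one_of_support _ _ fun x hx => ?_
          obtain ⟨s, a⟩ := x
          obtain ⟨hlt, hcase⟩ := ptwBelief_support f hf t ht A1 hx
          rcases hcase with h0 | hA
          · rw [show s = 0 from h0]
            exact ih01 a
          · rcases eq_or_ne s 0 with rfl | hs0
            · exact ih01 a
            · rw [show a = A1 s from hA]
              exact ihs1 s hs0
        · intro b'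
          rw [ptw_expPay ht (ptwBelief_ptw f hf t ht A1) w2 b',
            ptw_expPay ht (ptwBelief_ptw f hf t ht A1) w2 (B2 t)]
          exact hB2max t ht b'
      -- uniqueness at levels ≤ n+1
      have hu1 : ∀ t, t ≠ 0 → t ≤ n + 1 → ∀ a, (t, a) ∈ (SigmaProc w1 w2 f (n + 1)).1 →
          a = A1 t := by
        intro t ht htn a hmem
        obtain ⟨hprev, μ, hmd, hprob, hbr⟩ := (hmemS1 n (t, a)).1 hmem
        have hforce : ∀ s b, s ≠ 0 → s < t → b ≠ B2 s → μ.p (s, b) = 0 := by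
          intro s b hs0 hst hb
          by_contra hne
          have hmem2 : (s, b) ∈ (SigmaProc w1 w2 f n).2 := by
            by_contra hnm
            exact hne (probOn_forces μ _ hprob hnm)
          exact hb (ihu2 s hs0 (by omega) b hmem2)
        have hptw := forced_ptw hf ht hmd hforce
        apply hkey1 t ht a
        intro a'
        have := hbr a'
        rwa [ptw_expPay ht hptw w1 a', ptw_expPay ht hptw w1 a] at this
      have hu2 : ∀ t, t ≠ 0 → t ≤ n + 1 → ∀ b, (t, b) ∈ (SigmaProc w1 w2 f (n + 1)).2 →
          b = B2 t := by
        intro t ht htn b hmem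
        obtain ⟨hprev, μ, hmd, hprob, hbr⟩ := (hmemS2 n (t, b)).1 hmem
        have hforce : ∀ s a, s ≠ 0 → s < t → a ≠ A1 s → μ.p (s, a) = 0 := by
          intro s a hs0 hst ha
          by_contra hne
          have hmem2 : (s, a) ∈ (SigmaProc w1 w2 f n).1 := by
            by_contra hnm
            exact hne (probOn_forces μ _ hprob hnm)
          exact ha (ihu1 s hs0 (by omega) a hmem2)
        have hptw := forced_ptw hf ht hmd hforce
        apply hkey2 t ht b
        intro b'
        have := hbr b'
        rwa [ptw_expPay ht hptw w2 b', ptw_expPay ht hptw w2 b] at this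
      exact ⟨⟨h01, h02⟩, ⟨hs1, hs2⟩, ⟨hu1, hu2⟩⟩
  -- the Σ-sections at level k are singletons
  have hsec1 : ∀ k, k ≠ 0 → SigmaSec1 w1 w2 f k k = {A1 k} := by
    intro k hk
    ext a
    constructor
    · intro ha
      exact ((hmain k).2.2.1 k hk le_rfl a ha)
    · intro ha
      rw [Set.mem_singleton_iff] at ha
      rw [ha]
      exact (hmain k).2.1.1 k hk
  have hsec2 : ∀ k, k ≠ 0 → SigmaSec2 w1 w2 f k k = {B2 k} := by
    intro k hk
    ext b
    constructor
    · intro hb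
      exact ((hmain k).2.2.2 k hk le_rfl b hb)
    · intro hb
      rw [Set.mem_singleton_iff] at hb
      rw [hb]
      exact (hmain k).2.1.2 k hk
  refine ⟨w1, w2, ?_, ?_, ?_⟩
  · -- perturbation bound
    have heq : ∀ x : A × B, |v1 x.1 x.2 - w1 x.1 x.2| + |v2 x.2 x.1 - w2 x.2 x.1|
        = δ * (|r x.1| + |q x.2|) := by
      intro x
      have h1 : v1 x.1 x.2 - w1 x.1 x.2 = -(δ * r x.1) := by rw [hw1]; ring
      have h2 : v2 x.2 x.1 - w2 x.2 x.1 = -(δ * q x.2) := by rw [hw2]; ring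
      rw [h1, h2, abs_neg, abs_neg, abs_mul, abs_mul, abs_of_pos hδ0]
      ring
    rw [Finset.sum_congr rfl fun x _ => heq x, ← Finset.mul_sum, ← hC]
    calc δ * C ≤ δ * (C + 1) := by nlinarith
      _ < (ε / (C + 1)) * (C + 1) := by
          apply mul_lt_mul_of_pos_right hδm; linarith
      _ = ε := div_mul_cancel₀ ε (by linarith)
  · intro k hk
    exact ⟨⟨A1 k, hsec1 k (by omega)⟩, ⟨B2 k, hsec2 k (by omega)⟩⟩
  · -- CH coincides with Σ
    have hmemCH1 : ∀ (n k : ℕ), (CHProc w1 w2 f (n + 1)).1 k =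
        if k = n + 1 then
          {a | ∃ μ : Belief B, memDelta f (n + 1) μ ∧
            CHBelief (CHProc w1 w2 f n).2 n μ ∧ isBR w1 (n + 1) μ a}
        else (CHProc w1 w2 f n).1 k := fun n k => rfl
    have hmemCH2 : ∀ (n k : ℕ), (CHProc w1 w2 f (n + 1)).2 k =
        if k = n + 1 then
          {b | ∃ μ : Belief A, memDelta f (n + 1) μ ∧
            CHBelief (CHProc w1 w2 f n).1 n μ ∧ isBR w2 (n + 1) μ b}
        else (CHProc w1 w2 f n).2 k := fun n k => rfl
    have hmainCH : ∀ n : ℕ,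
        (∀ k, (CHProc w1 w2 f n).1 k = if k ≠ 0 ∧ k ≤ n then {A1 k} else Set.univ) ∧
        (∀ k, (CHProc w1 w2 f n).2 k = if k ≠ 0 ∧ k ≤ n then {B2 k} else Set.univ) := by
      intro n
      induction n with
      | zero =>
        constructor <;> intro k <;> rw [if_neg (by omega)] <;> rfl
      | succ n ih =>
        obtain ⟨ih1, ih2⟩ := ih
        constructor
        · intro k
          rw [hmemCH1 n k]
          rcases eq_or_ne k (n + 1) with rfl | hk
          · rw [if_pos rfl, if_pos ⟨by omega, le_rfl⟩]
            have hne : (n + 1 : ℕ) ≠ 0 := by omega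
            ext a
            simp only [Set.mem_setOf_eq, Set.mem_singleton_iff]
            constructor
            · rintro ⟨μ, hmd, hCH, hbr⟩
              have hforce : ∀ s b, s ≠ 0 → s < n + 1 → b ≠ B2 s → μ.p (s, b) = 0 := by
                intro s b hs0 hst hb
                by_contra hne2
                have := (hCH.1 (s, b)).1 hne2
                rw [ih2 s, if_pos ⟨hs0, by omega⟩] at this
                exact hb this.2
              have hptw := forced_ptw hf hne hmd hforce
              apply hkey1 (n + 1) hne a
              intro a'
              have := hbr a'
              rwa [ptw_expPay hne hptw w1 a', ptw_expPay hne hptw w1 a] at this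
            · rintro rfl
              refine ⟨ptwBelief f hf (n + 1) hne B2,
                ptw_memDelta hf (ptwBelief_ptw f hf (n + 1) hne B2), ⟨?_, ?_⟩, ?_⟩
              · intro x
                constructor
                · intro hx
                  obtain ⟨hlt, hcase⟩ := ptwBelief_support f hf (n + 1) hne B2 hx
                  refine ⟨by omega, ?_⟩
                  rcases eq_or_ne x.1 0 with h0 | h0
                  · rw [ih2 x.1, if_neg (by omega)]
                    exact Set.mem_univ _
                  · rw [ih2 x.1, if_pos ⟨h0, by omega⟩]
                    exact hcase.resolve_left h0
                · rintro ⟨hx1, hx2⟩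
                  refine ne_of_gt (ptwBelief_pos f hf (n + 1) hne B2 (by omega) ?_)
                  rcases eq_or_ne x.1 0 with h0 | h0
                  · exact Or.inl h0
                  · rw [ih2 x.1, if_pos ⟨h0, hx1⟩] at hx2
                    exact Or.inr hx2
              · intro t htn b b' hb hb'
                rcases eq_or_ne t 0 with rfl | ht0
                · rw [ptwBelief_p, ptwBelief_p]
                  simp
                · rw [ih2 t, if_pos ⟨ht0, htn⟩] at hb hb'
                  rw [Set.mem_singleton_iff] at hb hb'
                  rw [hb, hb']
              · intro a'
                rw [ptw_expPay hne (ptwBelief_ptw f hf (n + 1) hne B2) w1 a',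
                  ptw_expPay hne (ptwBelief_ptw f hf (n + 1) hne B2) w1 (A1 (n + 1))]
                exact hA1max (n + 1) hne a'
          · rw [if_neg hk, ih1 k]
            exact if_congr (by constructor <;> (rintro ⟨h1, h2⟩; exact ⟨h1, by omega⟩)) rfl rfl
        · intro k
          rw [hmemCH2 n k]
          rcases eq_or_ne k (n + 1) with rfl | hk
          · rw [if_pos rfl, if_pos ⟨by omega, le_rfl⟩]
            have hne : (n + 1 : ℕ) ≠ 0 := by omega
            ext b
            simp only [Set.mem_setOf_eq, Set.mem_singleton_iff]
            constructor
            · rintro ⟨μ, hmd, hCH, hbr⟩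
              have hforce : ∀ s a, s ≠ 0 → s < n + 1 → a ≠ A1 s → μ.p (s, a) = 0 := by
                intro s a hs0 hst ha
                by_contra hne2
                have := (hCH.1 (s, a)).1 hne2
                rw [ih1 s, if_pos ⟨hs0, by omega⟩] at this
                exact ha this.2
              have hptw := forced_ptw hf hne hmd hforce
              apply hkey2 (n + 1) hne b
              intro b'
              have := hbr b'
              rwa [ptw_expPay hne hptw w2 b', ptw_expPay hne hptw w2 b] at this
            · rintro rfl
              refine ⟨ptwBelief f hf (n + 1) hne A1,
                ptw_memDelta hf (ptwBelief_ptw f hf (n + 1) hne A1), ⟨?_, ?_⟩, ?_⟩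
              · intro x
                constructor
                · intro hx
                  obtain ⟨hlt, hcase⟩ := ptwBelief_support f hf (n + 1) hne A1 hx
                  refine ⟨by omega, ?_⟩
                  rcases eq_or_ne x.1 0 with h0 | h0
                  · rw [ih1 x.1, if_neg (by omega)]
                    exact Set.mem_univ _
                  · rw [ih1 x.1, if_pos ⟨h0, by omega⟩]
                    exact hcase.resolve_left h0
                · rintro ⟨hx1, hx2⟩
                  refine ne_of_gt (ptwBelief_pos f hf (n + 1) hne A1 (by omega) ?_)
                  rcases eq_or_ne x.1 0 with h0 | h0
                  · exact Or.inl h0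
                  · rw [ih1 x.1, if_pos ⟨h0, hx1⟩] at hx2
                    exact Or.inr hx2
              · intro t htn a a' ha ha'
                rcases eq_or_ne t 0 with rfl | ht0
                · rw [ptwBelief_p, ptwBelief_p]
                  simp
                · rw [ih1 t, if_pos ⟨ht0, htn⟩] at ha ha'
                  rw [Set.mem_singleton_iff] at ha ha'
                  rw [ha, ha']
              · intro b'
                rw [ptw_expPay hne (ptwBelief_ptw f hf (n + 1) hne A1) w2 b',
                  ptw_expPay hne (ptwBelief_ptw f hf (n + 1) hne A1) w2 (B2 (n + 1))]
                exact hB2max (n + 1) hne b'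
          · rw [if_neg hk, ih2 k]
            exact if_congr (by constructor <;> (rintro ⟨h1, h2⟩; exact ⟨h1, by omega⟩)) rfl rfl
    intro k
    rcases eq_or_ne k 0 with rfl | hk
    · constructor
      · show (CHProc w1 w2 f 0).1 0 = SigmaSec1 w1 w2 f 0 0
        rw [(hmainCH 0).1 0, if_neg (by omega)]
        rfl
      · show (CHProc w1 w2 f 0).2 0 = SigmaSec2 w1 w2 f 0 0
        rw [(hmainCH 0).2 0, if_neg (by omega)]
        rfl
    · constructor
      · show (CHProc w1 w2 f k).1 k = SigmaSec1 w1 w2 f k k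
        rw [(hmainCH k).1 k, if_pos ⟨hk, le_rfl⟩, hsec1 k hk]
      · show (CHProc w1 w2 f k).2 k = SigmaSec2 w1 w2 f k k
        rw [(hmainCH k).2 k, if_pos ⟨hk, le_rfl⟩, hsec2 k hk]
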